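/- Let γ be the standard Gaussian measure on ℝ, X a real random variable with density f with respect to γ such that f ∈ L^p(γ) for some p > 1, and let m = E[X]. Then the random variable X - m has law absolutely continuous with respect to γ with density g(x) = f(x+m)·exp{-mx - m²/2}, and g ∈ L^q(γ) for every 1 ≤ q < p. -/

import Mathlib

open MeasureTheory ProbabilityTheory Real
open scoped ENNReal

lemma aux_gauss_eq : gaussianReal 0 1 = volume.withDensity (gaussianPDF 0 1) :=
  gaussianReal_of_var_ne_zero 0 one_ne_zero

lemma aux_pdf_tilt (b x : ℝ) :
    gaussianPDFReal 0 1 x * rexp (b * x - b ^ 2 / 2) = gaussianPDFReal b 1 x := by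
  simp only [gaussianPDFReal, NNReal.coe_one, mul_one, sub_zero]
  rw [mul_assoc, ← Real.exp_add]
  congr 2
  ring

lemma aux_tilt (b : ℝ) :
    (gaussianReal 0 1).withDensity (fun x => ENNReal.ofReal (rexp (b * x - b ^ 2 / 2)))
      = gaussianReal b 1 := by
  rw [aux_gauss_eq, ← withDensity_mul _ (measurable_gaussianPDF 0 1)
    (by fun_prop), gaussianReal_of_var_ne_zero b one_ne_zero]
  congr 1
  ext x
  simp only [Pi.mul_apply, gaussianPDF]
  rw [← ENNReal.ofReal_mul (gaussianPDFReal_nonneg 0 1 x), aux_pdf_tilt]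

lemma aux_map_sub (μ : Measure ℝ) (F : ℝ → ℝ≥0∞) (hF : Measurable F) (m : ℝ) :
    (μ.withDensity F).map (· - m) = (μ.map (· - m)).withDensity (fun x => F (x + m)) := by
  ext s hs
  rw [Measure.map_apply (measurable_sub_const m) hs, withDensity_apply _ hs,
    setLIntegral_map hs (show Measurable fun a => F (a + m) from hF.comp (measurable_add_const m)) (measurable_sub_const m),
    withDensity_apply _ ((measurable_sub_const m) hs)]
  simp [Function.comp, sub_add_cancel]

lemma aux_expmom (b c : ℝ) :
    ∫⁻ x, ENNReal.ofReal (rexp (b * x + c)) ∂(gaussianReal 0 1)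
      = ENNReal.ofReal (rexp (b ^ 2 / 2 + c)) := by
  rw [aux_gauss_eq, lintegral_withDensity_eq_lintegral_mul _ (measurable_gaussianPDF 0 1)
    (by fun_prop)]
  have h : ∀ x, (gaussianPDF 0 1 * fun x => ENNReal.ofReal (rexp (b * x + c))) x
      = ENNReal.ofReal (rexp (b ^ 2 / 2 + c)) * gaussianPDF b 1 x := by
    intro x
    simp only [Pi.mul_apply, gaussianPDF]
    rw [← ENNReal.ofReal_mul (gaussianPDFReal_nonneg 0 1 x),
      ← ENNReal.ofReal_mul (Real.exp_nonneg _)]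
    congr 1
    simp only [gaussianPDFReal, NNReal.coe_one, mul_one, sub_zero]
    have key : ∀ u v w z : ℝ, u + v = w + z →
        (√(2 * π))⁻¹ * rexp u * rexp v = rexp w * ((√(2 * π))⁻¹ * rexp z) := by
      intro u v w z h
      rw [mul_assoc, ← Real.exp_add, mul_left_comm, ← Real.exp_add, h]
    exact key _ _ _ _ (by ring)
  simp_rw [h]
  rw [lintegral_const_mul _ (measurable_gaussianPDF b 1), lintegral_gaussianPDF_eq_one b one_ne_zero,
    mul_one]

/-- if `X` has γ-density `f ∈ L^p(γ)` with `p > 1` and mean `m`, then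
`X - m` has γ-density `g(x) = f(x+m) exp (-mx - m²/2)`, and `g ∈ L^q(γ)` for all
`1 ≤ q < p`. -/
theorem centered_density
    {Ω : Type*} [MeasurableSpace Ω] (P : Measure Ω) [IsProbabilityMeasure P]
    (X : Ω → ℝ) (hX : Measurable X) (f : ℝ → ℝ) (hf0 : ∀ x, 0 ≤ f x)
    (p : ℝ) (hp : 1 < p) (hfLp : MemLp f (ENNReal.ofReal p) (gaussianReal 0 1))
    (hlaw : Measure.map X P =
      (gaussianReal 0 1).withDensity (fun x => ENNReal.ofReal (f x)))
    (m : ℝ) (hm : m = ∫ ω, X ω ∂P) :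
    Measure.map (fun ω => X ω - m) P =
      (gaussianReal 0 1).withDensity
        (fun x => ENNReal.ofReal (f (x + m) * Real.exp (-m * x - m ^ 2 / 2))) ∧
    ∀ q : ℝ, 1 ≤ q → q < p →
      MemLp (fun x => f (x + m) * Real.exp (-m * x - m ^ 2 / 2))
        (ENNReal.ofReal q) (gaussianReal 0 1) := by
  have hp0 : (0:ℝ) < p := lt_trans one_pos hp
  obtain ⟨f₁, hf₁sm, hff₁⟩ := hfLp.aestronglyMeasurable
  set f'' : ℝ → ℝ := fun x => |f₁ x| with hf''def
  have hf''meas : Measurable f'' := hf₁sm.measurable.abs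
  have hf''nn : ∀ x, 0 ≤ f'' x := fun x => abs_nonneg _
  have hff'' : f =ᵐ[gaussianReal 0 1] f'' := by
    filter_upwards [hff₁] with x hx
    simp [hf''def, ← hx, abs_of_nonneg (hf0 x)]
  -- a.e. transfer along translation
  have hacm : gaussianReal m 1 ≪ gaussianReal 0 1 :=
    (gaussianReal_absolutelyContinuous m one_ne_zero).trans
      (gaussianReal_absolutelyContinuous' 0 one_ne_zero)
  have hmap : Measure.map (· + m) (gaussianReal 0 1) = gaussianReal m 1 := by
    simpa using gaussianReal_map_add_const (μ := 0) (v := 1) m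
  have hshift : ∀ᵐ x ∂(gaussianReal 0 1), f (x + m) = f'' (x + m) := by
    have h1 : ∀ᵐ y ∂(gaussianReal m 1), f y = f'' y := hacm.ae_le hff''
    rw [← hmap] at h1
    exact ae_of_ae_map (measurable_add_const m).aemeasurable h1
  constructor
  · -- Part 1
    have h0 : Measure.map (fun ω => X ω - m) P
        = Measure.map (· - m) (Measure.map X P) :=
      (Measure.map_map (measurable_sub_const m) hX).symm
    rw [h0, hlaw, withDensity_congr_ae
      (show (fun x => ENNReal.ofReal (f x)) =ᵐ[gaussianReal 0 1]
        (fun x => ENNReal.ofReal (f'' x)) from hff''.mono fun x hx => by simp [hx]),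
      aux_map_sub _ _ (by fun_prop) m]
    have hsub : (fun x : ℝ => x - m) = (· + (-m)) := funext fun x => sub_eq_add_neg x m
    rw [hsub, gaussianReal_map_add_const (μ := 0) (v := 1) (-m), zero_add]
    have htilt : gaussianReal (-m) 1
        = (gaussianReal 0 1).withDensity (fun x => ENNReal.ofReal (rexp (-m * x - m ^ 2 / 2))) := by
      rw [← aux_tilt (-m)]
      congr 1
      funext x
      ring_nf
    rw [htilt, ← withDensity_mul _ (by fun_prop) (by fun_prop)]
    refine withDensity_congr_ae ?_
    filter_upwards [hshift] with x hx
    simp only [Pi.mul_apply]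
    rw [← ENNReal.ofReal_mul (Real.exp_nonneg _), hx, mul_comm]
  · -- Part 2
    intro q hq1 hqp
    have hq0 : (0:ℝ) < q := lt_of_lt_of_le one_pos hq1
    set G : ℝ → ℝ := fun x => f'' (x + m) * rexp (-m * x - m ^ 2 / 2) with hGdef
    have hGmeas : Measurable G := (hf''meas.comp (measurable_add_const m)).mul (by fun_prop)
    have hGnn : ∀ x, 0 ≤ G x := fun x => mul_nonneg (hf''nn _) (Real.exp_nonneg _)
    have hGae : G =ᵐ[gaussianReal 0 1]
        (fun x => f (x + m) * rexp (-m * x - m ^ 2 / 2)) := by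
      filter_upwards [hshift] with x hx
      rw [hGdef]
      simp [hx]
    refine MemLp.ae_eq hGae ⟨hGmeas.aestronglyMeasurable, ?_⟩
    rw [eLpNorm_lt_top_iff_lintegral_rpow_enorm_lt_top
      (by simp [ENNReal.ofReal_eq_zero]; linarith) ENNReal.ofReal_ne_top,
      ENNReal.toReal_ofReal hq0.le]
    have hnorm : ∀ x, ‖G x‖ₑ ^ q = ENNReal.ofReal (G x) ^ q := fun x => by
      rw [Real.enorm_eq_ofReal (hGnn x)]
    simp_rw [hnorm]
    -- change of variables
    have step1 : ∫⁻ x, ENNReal.ofReal (G x) ^ q ∂(gaussianReal 0 1)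
        = ∫⁻ x, ENNReal.ofReal (f'' x ^ q)
            * ENNReal.ofReal (rexp ((1 - q) * m * x + (q - 1) * m ^ 2 / 2)) ∂(gaussianReal 0 1) := by
      rw [aux_gauss_eq,
        lintegral_withDensity_eq_lintegral_mul _ (measurable_gaussianPDF 0 1) (by fun_prop),
        lintegral_withDensity_eq_lintegral_mul _ (measurable_gaussianPDF 0 1) (by fun_prop),
        ← lintegral_sub_right_eq_self
          (fun x => (gaussianPDF 0 1 * fun x => ENNReal.ofReal (G x) ^ q) x) m]
      refine lintegral_congr fun x => ?_
      simp only [Pi.mul_apply, gaussianPDF, hGdef, sub_add_cancel]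
      rw [ENNReal.ofReal_rpow_of_nonneg (mul_nonneg (hf''nn _) (Real.exp_nonneg _)) hq0.le,
        Real.mul_rpow (hf''nn _) (Real.exp_nonneg _), ← Real.exp_mul,
        ← ENNReal.ofReal_mul (gaussianPDFReal_nonneg 0 1 _),
        ← ENNReal.ofReal_mul (by positivity),
        ← ENNReal.ofReal_mul (gaussianPDFReal_nonneg 0 1 _)]
      congr 1
      simp only [gaussianPDFReal, NNReal.coe_one, mul_one, sub_zero]
      have key : ∀ u v w z : ℝ, u + v = w + z →
          (√(2 * π))⁻¹ * rexp u * (f'' x ^ q * rexp v)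
            = (√(2 * π))⁻¹ * rexp w * (f'' x ^ q * rexp z) := by
        intro u v w z h
        rw [mul_mul_mul_comm, ← Real.exp_add, mul_mul_mul_comm, ← Real.exp_add, h]
      exact key _ _ _ _ (by ring)
    rw [step1]
    -- Hölder
    set s : ℝ := p / q with hsdef
    set t : ℝ := p / (p - q) with htdef
    have hs1 : 1 < s := (one_lt_div hq0).mpr hqp
    have hst : s.HolderConjugate t := by
      rw [Real.holderConjugate_iff_eq_conjExponent hs1, hsdef, htdef,
        div_sub_one hq0.ne', div_div_div_cancel_right₀ hq0.ne']
    have holder := ENNReal.lintegral_mul_le_Lp_mul_Lq (gaussianReal 0 1) hst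
      (f := fun x => ENNReal.ofReal (f'' x ^ q))
      (g := fun x => ENNReal.ofReal (rexp ((1 - q) * m * x + (q - 1) * m ^ 2 / 2)))
      (by fun_prop) (by fun_prop)
    simp only [Pi.mul_apply] at holder
    refine lt_of_le_of_lt holder ?_
    have hfin1 : ∫⁻ x, ENNReal.ofReal (f'' x ^ q) ^ s ∂(gaussianReal 0 1) ≠ ⊤ := by
      have hf''Lp : MemLp f'' (ENNReal.ofReal p) (gaussianReal 0 1) := hfLp.ae_eq hff''
      have h2 := hf''Lp.2
      rw [eLpNorm_lt_top_iff_lintegral_rpow_enorm_lt_top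
        (by simp [ENNReal.ofReal_eq_zero]; linarith) ENNReal.ofReal_ne_top,
        ENNReal.toReal_ofReal hp0.le] at h2
      have hqs : q * s = p := by
        rw [hsdef]
        field_simp
      have heq : ∀ x, ENNReal.ofReal (f'' x ^ q) ^ s = ‖f'' x‖ₑ ^ p := fun x => by
        rw [Real.enorm_eq_ofReal (hf''nn x),
          ENNReal.ofReal_rpow_of_nonneg (Real.rpow_nonneg (hf''nn x) q) (by positivity),
          ← Real.rpow_mul (hf''nn x), hqs,
          ENNReal.ofReal_rpow_of_nonneg (hf''nn x) hp0.le]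
      simp_rw [heq]
      exact h2.ne
    have ht0 : 0 < t := by
      rw [htdef]
      have : 0 < p - q := by linarith
      positivity
    have hfin2 : ∫⁻ x, ENNReal.ofReal (rexp ((1 - q) * m * x + (q - 1) * m ^ 2 / 2)) ^ t
        ∂(gaussianReal 0 1) ≠ ⊤ := by
      have heq : ∀ x, ENNReal.ofReal (rexp ((1 - q) * m * x + (q - 1) * m ^ 2 / 2)) ^ t
          = ENNReal.ofReal (rexp (((1 - q) * m * t) * x + (q - 1) * m ^ 2 / 2 * t)) := fun x => by
        rw [ENNReal.ofReal_rpow_of_nonneg (Real.exp_nonneg _) ht0.le, ← Real.exp_mul]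
        congr 1
        ring
      simp_rw [heq, aux_expmom]
      exact ENNReal.ofReal_ne_top
    exact ENNReal.mul_lt_top
      (ENNReal.rpow_lt_top_of_nonneg (by positivity) hfin1)
      (ENNReal.rpow_lt_top_of_nonneg (by positivity) hfin2)
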